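/- Polyconvexity of triples with single-signed determinant differences: Let C₁, C₂, C₃ ∈ M^{2×2} be such that either det(C_k − C_j) < 0 for all k ≠ j, or det(C_k − C_j) > 0 for all k ≠ j. Then the set {C₁, C₂, C₃} is polyconvex (equivalently, it equals its polyconvex hull). -/
import Mathlib


open Matrix

noncomputable section

/-- A set `𝔄 ⊆ M^{2×2}` is polyconvex if there is a convex set `𝔠 ⊆ M^{2×2} × ℝ` such that
`𝔄 = {Λ : (Λ, det Λ) ∈ 𝔠}`. -/
def IsPolyconvexSet (A : Set (Matrix (Fin 2) (Fin 2) ℝ)) : Prop :=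
  ∃ C : Set (Matrix (Fin 2) (Fin 2) ℝ × ℝ), Convex ℝ C ∧
    A = {Λ : Matrix (Fin 2) (Fin 2) ℝ | (Λ, Λ.det) ∈ C}

/-- The polyconvex hull of `𝔄 ⊆ M^{2×2}`: the intersection of all polyconvex sets
containing `𝔄`. -/
def polyconvexHull (A : Set (Matrix (Fin 2) (Fin 2) ℝ)) : Set (Matrix (Fin 2) (Fin 2) ℝ) :=
  ⋂₀ {B : Set (Matrix (Fin 2) (Fin 2) ℝ) | IsPolyconvexSet B ∧ A ⊆ B}

/-- Determinant of a convex combination of three 2×2 matrices. -/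
lemma det_combo_aux (A B D : Matrix (Fin 2) (Fin 2) ℝ) {a b c : ℝ} (h : a + b + c = 1) :
    (a • A + b • B + c • D).det =
      a * A.det + b * B.det + c * D.det
        - (a * b * (A - B).det + a * c * (A - D).det + b * c * (B - D).det) := by
  have hc : c = 1 - a - b := by linarith
  subst hc
  simp only [Matrix.det_fin_two, Matrix.add_apply, Matrix.smul_apply, Matrix.sub_apply,
    smul_eq_mul]
  ring

lemma weights_vertex {l0 l1 l2 : ℝ} (hs : l0 + l1 + l2 = 1)
    (h01 : l0 * l1 = 0) (h02 : l0 * l2 = 0) (h12 : l1 * l2 = 0) :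
    (l0 = 1 ∧ l1 = 0 ∧ l2 = 0) ∨ (l0 = 0 ∧ l1 = 1 ∧ l2 = 0) ∨
      (l0 = 0 ∧ l1 = 0 ∧ l2 = 1) := by
  rcases mul_eq_zero.mp h01 with h0 | h1
  · rcases mul_eq_zero.mp h12 with h1 | h2
    · exact Or.inr (Or.inr ⟨h0, h1, by linarith⟩)
    · exact Or.inr (Or.inl ⟨h0, by linarith, h2⟩)
  · rcases mul_eq_zero.mp h02 with h0 | h2
    · exact Or.inr (Or.inr ⟨h0, h1, by linarith⟩)
    · exact Or.inl ⟨by linarith, h1, h2⟩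

/-- **Polyconvexity of triples with single-signed determinant differences.**
If `C₁, C₂, C₃ ∈ M^{2×2}` are such that either `det(C_k − C_j) < 0` for all `k ≠ j`, or
`det(C_k − C_j) > 0` for all `k ≠ j`, then `{C₁, C₂, C₃}` is polyconvex; equivalently, it
equals its polyconvex hull. -/
theorem isPolyconvexSet_triple_of_signed_det_differences (C : Fin 3 → Matrix (Fin 2) (Fin 2) ℝ)
    (h : (∀ k j, k ≠ j → (C k - C j).det < 0) ∨ (∀ k j, k ≠ j → 0 < (C k - C j).det)) :
    IsPolyconvexSet {C 0, C 1, C 2} ∧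
      polyconvexHull {C 0, C 1, C 2} = {C 0, C 1, C 2} := by
  set g : Fin 3 → Matrix (Fin 2) (Fin 2) ℝ × ℝ := fun i => (C i, (C i).det) with hg
  have hpoly : IsPolyconvexSet {C 0, C 1, C 2} := by
    refine ⟨convexHull ℝ {g 0, g 1, g 2}, convex_convexHull ℝ _, ?_⟩
    ext Λ
    constructor
    · rintro (rfl | rfl | rfl) <;>
        · apply subset_convexHull
          simp [hg]
    · intro hΛ
      simp only [Set.mem_setOf_eq] at hΛ
      have hins : ({g 0, g 1, g 2} : Set (Matrix (Fin 2) (Fin 2) ℝ × ℝ))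
          = insert (g 0) {g 1, g 2} := rfl
      rw [hins, convexHull_insert ⟨g 1, by simp⟩, mem_convexJoin] at hΛ
      obtain ⟨x, hx, z, hz, hseg⟩ := hΛ
      rw [Set.mem_singleton_iff] at hx
      subst hx
      rw [convexHull_pair] at hz
      obtain ⟨cc, dd, hcc, hdd, hcd, rfl⟩ := hz
      obtain ⟨a, b, ha, hb, hab, heq⟩ := hseg
      have h1 := congrArg Prod.fst heq
      have h2 := congrArg Prod.snd heq
      simp only [Prod.smul_fst, Prod.smul_snd, Prod.fst_add, Prod.snd_add, hg,
        smul_eq_mul] at h1 h2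
      -- weights
      set l0 := a with hl0
      set l1 := b * cc with hl1
      set l2 := b * dd with hl2
      have hsum : l0 + l1 + l2 = 1 := by
        simp only [hl0, hl1, hl2]
        linear_combination hab + b * hcd
      have hΛeq : Λ = l0 • C 0 + l1 • C 1 + l2 • C 2 := by
        rw [← h1]
        simp only [hl0, hl1, hl2, smul_add, smul_smul]
        abel
      have hdet : Λ.det = l0 * (C 0).det + l1 * (C 1).det + l2 * (C 2).det := by
        rw [← h2]
        simp only [hl0, hl1, hl2]
        ring
      have hcombo := det_combo_aux (C 0) (C 1) (C 2) hsum
      rw [← hΛeq, hdet] at hcombo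
      have hzero : l0 * l1 * (C 0 - C 1).det + l0 * l2 * (C 0 - C 2).det
          + l1 * l2 * (C 1 - C 2).det = 0 := by linarith
      have hl0n : 0 ≤ l0 := ha
      have hl1n : 0 ≤ l1 := mul_nonneg hb hcc
      have hl2n : 0 ≤ l2 := mul_nonneg hb hdd
      -- each product of weights vanishes
      have hprods : l0 * l1 = 0 ∧ l0 * l2 = 0 ∧ l1 * l2 = 0 := by
        rcases h with hneg | hpos
        · have d01 := hneg 0 1 (by decide)
          have d02 := hneg 0 2 (by decide)
          have d12 := hneg 1 2 (by decide)
          have t01 : l0 * l1 * (C 0 - C 1).det ≤ 0 :=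
            mul_nonpos_of_nonneg_of_nonpos (mul_nonneg hl0n hl1n) d01.le
          have t02 : l0 * l2 * (C 0 - C 2).det ≤ 0 :=
            mul_nonpos_of_nonneg_of_nonpos (mul_nonneg hl0n hl2n) d02.le
          have t12 : l1 * l2 * (C 1 - C 2).det ≤ 0 :=
            mul_nonpos_of_nonneg_of_nonpos (mul_nonneg hl1n hl2n) d12.le
          have e01 : l0 * l1 * (C 0 - C 1).det = 0 := by linarith
          have e02 : l0 * l2 * (C 0 - C 2).det = 0 := by linarith
          have e12 : l1 * l2 * (C 1 - C 2).det = 0 := by linarith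
          exact ⟨(mul_eq_zero.mp e01).resolve_right d01.ne,
            (mul_eq_zero.mp e02).resolve_right d02.ne,
            (mul_eq_zero.mp e12).resolve_right d12.ne⟩
        · have d01 := hpos 0 1 (by decide)
          have d02 := hpos 0 2 (by decide)
          have d12 := hpos 1 2 (by decide)
          have t01 : 0 ≤ l0 * l1 * (C 0 - C 1).det :=
            mul_nonneg (mul_nonneg hl0n hl1n) d01.le
          have t02 : 0 ≤ l0 * l2 * (C 0 - C 2).det :=
            mul_nonneg (mul_nonneg hl0n hl2n) d02.le
          have t12 : 0 ≤ l1 * l2 * (C 1 - C 2).det :=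
            mul_nonneg (mul_nonneg hl1n hl2n) d12.le
          have e01 : l0 * l1 * (C 0 - C 1).det = 0 := by linarith
          have e02 : l0 * l2 * (C 0 - C 2).det = 0 := by linarith
          have e12 : l1 * l2 * (C 1 - C 2).det = 0 := by linarith
          exact ⟨(mul_eq_zero.mp e01).resolve_right d01.ne',
            (mul_eq_zero.mp e02).resolve_right d02.ne',
            (mul_eq_zero.mp e12).resolve_right d12.ne'⟩
      obtain ⟨h01, h02, h12⟩ := hprods
      rcases weights_vertex hsum h01 h02 h12 with ⟨e0, e1, e2⟩ | ⟨e0, e1, e2⟩ | ⟨e0, e1, e2⟩ <;>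
        rw [e0, e1, e2] at hΛeq <;> simp only [one_smul, zero_smul, add_zero, zero_add] at hΛeq
      · exact Or.inl hΛeq
      · exact Or.inr (Or.inl hΛeq)
      · exact Or.inr (Or.inr hΛeq)
  refine ⟨hpoly, ?_⟩
  apply Set.Subset.antisymm
  · exact Set.sInter_subset_of_mem ⟨hpoly, Set.Subset.refl _⟩
  · exact Set.subset_sInter fun B hB => hB.2
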